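/- Let G be a finite group with a normal subgroup V such that V is an elementary abelian 2-group, the quotient W = G/V is an elementary abelian 2-group, and V is of maximal rank in G. If every element of order 2 in G is central, then rank(G/V) ≤ 2·rank(V). -/

import Mathlib

section Helpers
variable {G : Type*} [Group G] {V : Subgroup G}

/-- The commutator-like element `ww m a = m⁻¹a⁻¹ma`, satisfying `m*a = a*m*(ww m a)`. -/
def ww (m a : G) : G := m⁻¹ * a⁻¹ * m * a

lemma ww_spec (m a : G) : m * a = a * m * ww m a := by unfold ww; group

variable (hcom : ∀ m a : G, ww m a ∈ V) (hZ : ∀ v ∈ V, v ∈ Subgroup.center G)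
include hcom hZ

lemma sq_mul' (a m : G) : (a * m) ^ 2 = a ^ 2 * m ^ 2 * ww m a := by
  have hc := Subgroup.mem_center_iff.mp (hZ _ (hcom m a))
  calc (a*m)^2 = a*(m*a)*m := by rw [pow_two]; group
  _ = a*(a*m*ww m a)*m := by rw [← ww_spec]
  _ = a*a*m*(ww m a*m) := by group
  _ = a*a*m*(m*ww m a) := by rw [hc m]
  _ = a^2*m^2*ww m a := by rw [pow_two, pow_two]; group

lemma ww_mul_left (m m' a : G) : ww (m * m') a = ww m a * ww m' a := by
  have h1 := Subgroup.mem_center_iff.mp (hZ _ (hcom m a))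
  have key : m*m'*a = a*(m*m')*(ww m a * ww m' a) := by
    calc m*m'*a = m*(a*m'*ww m' a) := by rw [← ww_spec]; group
    _ = (m*a)*(m'*ww m' a) := by group
    _ = (a*m*ww m a)*(m'*ww m' a) := by rw [← ww_spec]
    _ = a*m*(ww m a*m')*ww m' a := by group
    _ = a*m*(m'*ww m a)*ww m' a := by rw [h1 m']
    _ = a*(m*m')*(ww m a * ww m' a) := by group
  calc ww (m*m') a = (a*(m*m'))⁻¹*(m*m'*a) := by unfold ww; group
  _ = (a*(m*m'))⁻¹*(a*(m*m')*(ww m a * ww m' a)) := by rw [key]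
  _ = ww m a * ww m' a := by group

lemma ww_mul_right (m a a' : G) : ww m (a * a') = ww m a * ww m a' := by
  have h1 := Subgroup.mem_center_iff.mp (hZ _ (hcom m a))
  have h2 := Subgroup.mem_center_iff.mp (hZ _ (hcom m a'))
  have key : m*(a*a') = (a*a')*m*(ww m a * ww m a') := by
    calc m*(a*a') = (a*m*ww m a)*a' := by rw [← ww_spec]; group
    _ = a*m*(ww m a*a') := by group
    _ = a*m*(a'*ww m a) := by rw [h1 a']
    _ = a*(m*a')*ww m a := by group
    _ = a*(a'*m*ww m a')*ww m a := by rw [← ww_spec]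
    _ = (a*a')*m*(ww m a'*ww m a) := by group
    _ = (a*a')*m*(ww m a*ww m a') := by rw [h2 (ww m a)]
  calc ww m (a*a') = ((a*a')*m)⁻¹*(m*(a*a')) := by unfold ww; group
  _ = ((a*a')*m)⁻¹*((a*a')*m*(ww m a * ww m a')) := by rw [key]
  _ = ww m a * ww m a' := by group

lemma ww_pow_left (m a : G) (n : ℕ) : ww (m ^ n) a = ww m a ^ n := by
  induction n with
  | zero => simp [ww]
  | succ k ih => rw [pow_succ, ww_mul_left hcom hZ, ih, pow_succ]

lemma ww_pow_right (m a : G) (n : ℕ) : ww m (a ^ n) = ww m a ^ n := by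
  induction n with
  | zero => simp [ww]
  | succ k ih => rw [pow_succ, ww_mul_right hcom hZ, ih, pow_succ]

lemma ww_pow_pow (m a : G) (s t : ℕ) : ww (m ^ s) (a ^ t) = ww m a ^ (s * t) := by
  rw [ww_pow_left hcom hZ, ww_pow_right hcom hZ, ← pow_mul, Nat.mul_comm]

lemma ww_list_prod (a : G) (L : List G) :
    ww L.prod a = (L.map (fun b => ww b a)).prod := by
  induction L with
  | nil => simp [ww]
  | cons b L ih => rw [List.prod_cons, ww_mul_left hcom hZ, ih, List.map_cons, List.prod_cons]

/-- Ordered product `∏ i, gs i ^ e i`. -/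
def QQ {k : ℕ} (gs : Fin k → G) (e : Fin k → ℕ) : G :=
  ((List.finRange k).map (fun i => gs i ^ e i)).prod

include hcom hZ in
lemma core : ∀ (k : ℕ) (gs : Fin k → G), ∃ d : Fin k → Fin k → G,
    (∀ i j, d i j ∈ V) ∧ ∀ e : Fin k → ℕ,
    QQ gs e ^ 2 =
      ((List.finRange k).map (fun i => (gs i ^ 2) ^ e i)).prod *
      ((List.finRange k).map (fun i =>
        ((List.finRange k).map (fun j => d i j ^ (e j * e i))).prod)).prod := by
  intro k
  induction k with
  | zero =>
    intro gs
    exact ⟨fun i j => 1, fun i j => one_mem _, fun e => by simp [QQ]⟩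
  | succ k IH =>
    intro gs
    obtain ⟨d', hd'V, hd'⟩ := IH (fun i => gs i.succ)
    refine ⟨Fin.cases (Fin.cases 1 (fun j' => ww (gs j'.succ) (gs 0)))
      (fun i' => Fin.cases 1 (fun j' => d' i' j')), ?_, ?_⟩
    · intro i j
      induction i using Fin.cases with
      | zero =>
        induction j using Fin.cases with
        | zero => simpa using one_mem _
        | succ j' => simpa using hcom _ _
      | succ i' =>
        induction j using Fin.cases with
        | zero => simpa using one_mem _
        | succ j' => simpa using hd'V i' j'
    · intro e
      set a := gs 0 ^ e 0 with ha
      set m := QQ (fun i => gs i.succ) (fun i => e i.succ) with hm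
      have hA' : m ^ 2 = ((List.finRange k).map (fun i => ((gs i.succ) ^ 2) ^ e i.succ)).prod *
          ((List.finRange k).map (fun i =>
            ((List.finRange k).map (fun j => d' i j ^ (e j.succ * e i.succ))).prod)).prod :=
        hd' (fun i => e i.succ)
      have hDmem : ((List.finRange k).map (fun i =>
            ((List.finRange k).map (fun j => d' i j ^ (e j.succ * e i.succ))).prod)).prod ∈ V := by
        apply Subgroup.list_prod_mem
        intro x hx
        simp only [List.mem_map] at hx
        obtain ⟨i, -, rfl⟩ := hx
        apply Subgroup.list_prod_mem
        intro y hy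
        simp only [List.mem_map] at hy
        obtain ⟨j, -, rfl⟩ := hy
        exact Subgroup.pow_mem _ (hd'V i j) _
      have hQ : QQ gs e = a * m := by
        rw [QQ, List.finRange_succ, List.map_cons, List.prod_cons, List.map_map]
        rfl
      have hww : ww m a = ((List.finRange k).map
          (fun j => ww (gs j.succ) (gs 0) ^ (e j.succ * e 0))).prod := by
        rw [hm, QQ, ww_list_prod hcom hZ, List.map_map]
        exact congrArg List.prod (List.map_congr_left (fun j _ => ww_pow_pow hcom hZ _ _ _ _))
      have hcentD := Subgroup.mem_center_iff.mp (hZ _ hDmem)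
      rw [hQ, sq_mul' hcom hZ, hA', hww, ha]
      rw [← pow_mul, Nat.mul_comm (e 0) 2, pow_mul]
      simp only [List.finRange_succ, List.map_cons, List.prod_cons, List.map_map,
        Fin.cases_zero, Fin.cases_succ, one_pow, one_mul, Function.comp_def]
      exact (fun (X A D W : G) (h : D * W = W * D) => by rw [← h]; group :
        ∀ (X A D W : G), D * W = W * D → X * (A * D) * W = X * A * (W * D)) _ _ _ _ (hcentD _).symm

end Helpers

lemma dvd_natCard_of_dvd_fintypeCard {α : Type*} {p : ℕ} (inst : Fintype α)
    (h : p ∣ @Fintype.card α inst) : p ∣ Nat.card α := by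
  rwa [← @Nat.card_eq_fintype_card α inst] at h

/-- A subgroup is an elementary abelian 2-group: every element squares to the
identity (such a subgroup is automatically abelian). -/
def IsElemAbelian2 {G : Type*} [Group G] (A : Subgroup G) : Prop :=
  (∀ a ∈ A, a * a = 1) ∧ ∀ a ∈ A, ∀ b ∈ A, a * b = b * a

/-- A subgroup `V` of `G` has maximal rank if every elementary abelian
2-subgroup `A` of `G` satisfies `|A| ≤ |V|`. -/
def IsMaximalRank2 {G : Type*} [Group G] (V : Subgroup G) : Prop :=
  ∀ A : Subgroup G, IsElemAbelian2 A → Nat.card A ≤ Nat.card V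

set_option maxHeartbeats 2000000 in
theorem stmt1 (G : Type*) [Group G] [Finite G] (V : Subgroup G) [V.Normal]
    (hV : IsElemAbelian2 V) (hmax : IsMaximalRank2 V)
    (hW : ∀ w : G ⧸ V, w * w = 1)
    (nV nW : ℕ)
    (hnV : Nat.card V = 2 ^ nV)
    (hnW : Nat.card (G ⧸ V) = 2 ^ nW)
    -- every element of order 2 in G is central
    (h2C : ∀ g : G, orderOf g = 2 → g ∈ Subgroup.center G) :
    nW ≤ 2 * nV := by
  by_contra hcon
  push_neg at hcon
  -- basic structural facts
  have hsqV : ∀ g : G, g ^ 2 ∈ V := by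
    intro g
    have h1 : ((g * g : G) : G ⧸ V) = 1 := by rw [QuotientGroup.mk_mul]; exact hW _
    rw [pow_two]; exact (QuotientGroup.eq_one_iff _).mp h1
  have hWinv : ∀ x : G ⧸ V, x⁻¹ = x := fun x => inv_eq_of_mul_eq_one_right (hW x)
  have hWcomm : ∀ x y : G ⧸ V, x * y = y * x := by
    intro x y
    calc x * y = (x * y)⁻¹ := (hWinv _).symm
    _ = y⁻¹ * x⁻¹ := mul_inv_rev x y
    _ = y * x := by rw [hWinv, hWinv]
  have hcomV : ∀ m a : G, ww m a ∈ V := by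
    intro m a
    have h1 : ((ww m a : G) : G ⧸ V) = 1 := by
      show ((m⁻¹ * a⁻¹ * m * a : G) : G ⧸ V) = 1
      have h2 : ((m⁻¹ * a⁻¹ * m * a : G) : G ⧸ V)
          = (m : G ⧸ V)⁻¹ * (a : G ⧸ V)⁻¹ * (m : G ⧸ V) * (a : G ⧸ V) := by
        simp
      rw [h2, mul_assoc, hWcomm (m : G ⧸ V) (a : G ⧸ V)]
      group
    exact (QuotientGroup.eq_one_iff _).mp h1
  have hVZ : ∀ v ∈ V, v ∈ Subgroup.center G := by
    intro v hv
    rcases eq_or_ne v 1 with rfl | hne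
    · exact Subgroup.one_mem _
    · exact h2C v (orderOf_eq_prime (by rw [pow_two]; exact hV.1 v hv) hne)
  -- vector space structures
  letI : CommGroup ↥V :=
    { (inferInstance : Group ↥V) with mul_comm := fun x y => Subtype.ext (hV.2 x x.2 y y.2) }
  letI : Module (ZMod 2) (Additive ↥V) := AddCommGroup.zmodModule (by
    intro x
    rw [two_nsmul]
    exact Subtype.ext (hV.1 _ (Additive.toMul x).2))
  letI : CommGroup (G ⧸ V) :=
    { (inferInstance : Group (G ⧸ V)) with mul_comm := hWcomm }
  letI : Module (ZMod 2) (Additive (G ⧸ V)) := AddCommGroup.zmodModule (by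
    intro x
    rw [two_nsmul]
    exact hW (Additive.toMul x))
  haveI : Module.Finite (ZMod 2) (Additive ↥V) :=
    Module.finite_iff_finite.mpr inferInstance
  haveI : Module.Finite (ZMod 2) (Additive (G ⧸ V)) :=
    Module.finite_iff_finite.mpr inferInstance
  set rV := Module.finrank (ZMod 2) (Additive ↥V) with hrVdef
  set rW := Module.finrank (ZMod 2) (Additive (G ⧸ V)) with hrWdef
  have hcardV : Nat.card ↥V = 2 ^ rV := by
    letI : Fintype (Additive ↥V) := Fintype.ofFinite _
    have h1 : Nat.card ↥V = Nat.card (Additive ↥V) := Nat.card_congr Additive.ofMul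
    rw [h1, Nat.card_eq_fintype_card, Module.card_eq_pow_finrank (K := ZMod 2) (V := Additive ↥V),
      ZMod.card]
  have hcardW : Nat.card (G ⧸ V) = 2 ^ rW := by
    letI : Fintype (Additive (G ⧸ V)) := Fintype.ofFinite _
    have h1 : Nat.card (G ⧸ V) = Nat.card (Additive (G ⧸ V)) := Nat.card_congr Additive.ofMul
    rw [h1, Nat.card_eq_fintype_card,
      Module.card_eq_pow_finrank (K := ZMod 2) (V := Additive (G ⧸ V)), ZMod.card]
  have hpV : (2:ℕ) ^ rV = 2 ^ nV := by rw [← hcardV, hnV]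
  have hpW : (2:ℕ) ^ rW = 2 ^ nW := by rw [← hcardW, hnW]
  have hrV : rV = nV := Nat.pow_right_injective le_rfl hpV
  have hrW : rW = nW := Nat.pow_right_injective le_rfl hpW
  -- bases
  let bV : Module.Basis (Fin rV) (ZMod 2) (Additive ↥V) := Module.finBasis (ZMod 2) (Additive ↥V)
  let bW : Module.Basis (Fin rW) (ZMod 2) (Additive (G ⧸ V)) :=
    Module.finBasis (ZMod 2) (Additive (G ⧸ V))
  -- lifts of the basis of W
  have hsurj : ∀ i : Fin rW, ∃ g : G, (g : G ⧸ V) = Additive.toMul (bW i) :=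
    fun i => QuotientGroup.mk_surjective _
  choose gs hgs using hsurj
  -- the coordinate functionals on V
  haveI : DecidablePred (· ∈ V) := fun _ => Classical.dec _
  let f : G → Fin rV → ZMod 2 := fun g j =>
    if h : g ∈ V then bV.repr (Additive.ofMul (⟨g, h⟩ : ↥V)) j else 0
  have f_apply : ∀ (g) (h : g ∈ V) (j), f g j = bV.repr (Additive.ofMul (⟨g, h⟩ : ↥V)) j :=
    fun g h j => dif_pos h
  have f_one : ∀ j, f 1 j = 0 := by
    intro j
    rw [f_apply 1 (one_mem V)]
    show bV.repr (Additive.ofMul (1 : ↥V)) j = 0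
    simp
  have f_mul : ∀ g h, g ∈ V → h ∈ V → ∀ j, f (g * h) j = f g j + f h j := by
    intro g h hg hh j
    rw [f_apply _ (mul_mem hg hh), f_apply _ hg, f_apply _ hh]
    have e1 : (⟨g * h, mul_mem hg hh⟩ : ↥V) = (⟨g, hg⟩ : ↥V) * (⟨h, hh⟩ : ↥V) := rfl
    rw [e1, ofMul_mul, map_add, Finsupp.add_apply]
  have f_pow : ∀ g (hg : g ∈ V) (n : ℕ) (j), f (g ^ n) j = (n : ZMod 2) * f g j := by
    intro g hg n j
    rw [f_apply _ (pow_mem hg n), f_apply _ hg]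
    have e1 : (⟨g ^ n, pow_mem hg n⟩ : ↥V) = (⟨g, hg⟩ : ↥V) ^ n := rfl
    rw [e1, ofMul_pow, map_nsmul, Finsupp.smul_apply, nsmul_eq_mul]
  have f_list : ∀ (L : List G), (∀ b ∈ L, b ∈ V) → ∀ j,
      f L.prod j = (L.map (fun b => f b j)).sum := by
    intro L
    induction L with
    | nil => intro _ j; simpa using f_one j
    | cons b L ih =>
      intro hmem j
      rw [List.prod_cons, List.map_cons, List.sum_cons,
        f_mul _ _ (hmem b (by simp)) (Subgroup.list_prod_mem V (fun x hx => hmem x (by simp [hx]))),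
        ih (fun x hx => hmem x (by simp [hx])) j]
  -- the quadratic expansion from `core`
  obtain ⟨d, hdV, hcore⟩ := core hcomV hVZ rW gs
  -- the polynomials
  let P : Fin rV → MvPolynomial (Fin rW) (ZMod 2) := fun j =>
    (∑ i : Fin rW, MvPolynomial.C (f (gs i ^ 2) j) * MvPolynomial.X i) +
    ∑ i : Fin rW, ∑ i' : Fin rW,
      MvPolynomial.C (f (d i i') j) * (MvPolynomial.X i' * MvPolynomial.X i)
  have heval : ∀ (x : Fin rW → ZMod 2) (j),
      MvPolynomial.eval x (P j) = f ((QQ gs (fun i => (x i).val)) ^ 2) j := by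
    intro x j
    have hAmem : ∀ b ∈ (List.finRange rW).map (fun i => (gs i ^ 2) ^ (x i).val), b ∈ V := by
      intro b hb
      simp only [List.mem_map] at hb
      obtain ⟨i, -, rfl⟩ := hb
      exact pow_mem (hsqV _) _
    have hDmem : ∀ b ∈ (List.finRange rW).map (fun i =>
        ((List.finRange rW).map (fun i2 => d i i2 ^ ((x i2).val * (x i).val))).prod), b ∈ V := by
      intro b hb
      simp only [List.mem_map] at hb
      obtain ⟨i, -, rfl⟩ := hb
      exact Subgroup.list_prod_mem V (by
        intro y hy
        simp only [List.mem_map] at hy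
        obtain ⟨i2, -, rfl⟩ := hy
        exact pow_mem (hdV i i2) _)
    rw [hcore (fun i => (x i).val),
      f_mul _ _ (Subgroup.list_prod_mem V hAmem) (Subgroup.list_prod_mem V hDmem),
      f_list _ hAmem j, f_list _ hDmem j]
    have hA : (((List.finRange rW).map (fun i => (gs i ^ 2) ^ (x i).val)).map
        (fun b => f b j)).sum = ∑ i : Fin rW, f (gs i ^ 2) j * x i := by
      rw [List.map_map, ← Fin.sum_univ_def]
      refine Finset.sum_congr rfl (fun i _ => ?_)
      show f ((gs i ^ 2) ^ (x i).val) j = f (gs i ^ 2) j * x i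
      rw [f_pow _ (hsqV _), ZMod.natCast_rightInverse (x i), mul_comm]
    have hD : (((List.finRange rW).map (fun i =>
        ((List.finRange rW).map (fun i2 => d i i2 ^ ((x i2).val * (x i).val))).prod)).map
        (fun b => f b j)).sum
        = ∑ i : Fin rW, ∑ i' : Fin rW, f (d i i') j * (x i' * x i) := by
      rw [List.map_map, ← Fin.sum_univ_def]
      refine Finset.sum_congr rfl (fun i _ => ?_)
      show f (((List.finRange rW).map (fun i2 => d i i2 ^ ((x i2).val * (x i).val))).prod) j
        = ∑ i' : Fin rW, f (d i i') j * (x i' * x i)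
      rw [f_list _ (by
        intro y hy
        simp only [List.mem_map] at hy
        obtain ⟨i2, -, rfl⟩ := hy
        exact pow_mem (hdV i i2) _) j, List.map_map, ← Fin.sum_univ_def]
      refine Finset.sum_congr rfl (fun i' _ => ?_)
      show f (d i i' ^ ((x i').val * (x i).val)) j = f (d i i') j * (x i' * x i)
      rw [f_pow _ (hdV i i'), Nat.cast_mul, ZMod.natCast_rightInverse (x i'),
        ZMod.natCast_rightInverse (x i)]
      ring
    rw [hA, hD]
    simp only [P, map_add, map_sum, map_mul, MvPolynomial.eval_C, MvPolynomial.eval_X]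
  -- degrees
  have hdeg : ∀ j, (P j).totalDegree ≤ 2 := by
    intro j
    refine le_trans (MvPolynomial.totalDegree_add _ _) (sup_le ?_ ?_)
    · refine MvPolynomial.totalDegree_finsetSum_le (fun i _ => ?_)
      refine le_trans (MvPolynomial.totalDegree_mul _ _) ?_
      simp [MvPolynomial.totalDegree_C, MvPolynomial.totalDegree_X]
    · refine MvPolynomial.totalDegree_finsetSum_le (fun i _ => ?_)
      refine MvPolynomial.totalDegree_finsetSum_le (fun i' _ => ?_)
      refine le_trans (MvPolynomial.totalDegree_mul _ _) ?_
      refine le_trans (add_le_add le_rfl (MvPolynomial.totalDegree_mul _ _)) ?_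
      simp [MvPolynomial.totalDegree_C, MvPolynomial.totalDegree_X]
  -- Chevalley-Warning
  have hdvd : 2 ∣ Nat.card {x : Fin rW → ZMod 2 // ∀ j, MvPolynomial.eval x (P j) = 0} := by
    have hlt : ∑ j : Fin rV, (P j).totalDegree < Fintype.card (Fin rW) := by
      calc ∑ j : Fin rV, (P j).totalDegree ≤ ∑ _j : Fin rV, 2 :=
            Finset.sum_le_sum (fun j _ => hdeg j)
      _ = 2 * rV := by simp [Finset.sum_const, Nat.mul_comm]
      _ < rW := by rw [hrV, hrW]; omega
      _ = Fintype.card (Fin rW) := (Fintype.card_fin rW).symm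
    have h := char_dvd_card_solutions_of_fintype_sum_lt (K := ZMod 2) (σ := Fin rW)
      (ι := Fin rV) (f := P) 2 hlt
    exact dvd_natCard_of_dvd_fintypeCard _ h
  -- the zero solution
  have hQzero : QQ gs (fun i => ((0 : Fin rW → ZMod 2) i).val) = 1 := by
    simp only [QQ, Pi.zero_apply, ZMod.val_zero, pow_zero]
    exact List.prod_eq_one (by intro y hy; simp only [List.mem_map] at hy; exact hy.choose_spec.2.symm)
  have hzero_sol : ∀ j, MvPolynomial.eval (0 : Fin rW → ZMod 2) (P j) = 0 := by
    intro j
    rw [heval, hQzero, one_pow]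
    exact f_one j
  haveI hne : Nonempty {x : Fin rW → ZMod 2 // ∀ j, MvPolynomial.eval x (P j) = 0} :=
    ⟨⟨0, hzero_sol⟩⟩
  have hcard2 : 2 ≤ Nat.card {x : Fin rW → ZMod 2 // ∀ j, MvPolynomial.eval x (P j) = 0} :=
    Nat.le_of_dvd Nat.card_pos hdvd
  haveI : Nontrivial {x : Fin rW → ZMod 2 // ∀ j, MvPolynomial.eval x (P j) = 0} :=
    Finite.one_lt_card_iff_nontrivial.mp (by omega)
  obtain ⟨⟨x, hxsol⟩, hxne⟩ := exists_ne
    (⟨0, hzero_sol⟩ : {x : Fin rW → ZMod 2 // ∀ j, MvPolynomial.eval x (P j) = 0})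
  have hxne0 : x ≠ 0 := fun h => hxne (Subtype.ext h)
  set t := QQ gs (fun i => (x i).val) with ht
  -- t squares to 1
  have htVsq : t ^ 2 ∈ V := hsqV t
  have ht2 : t ^ 2 = 1 := by
    have hfz : ∀ j, f (t ^ 2) j = 0 := fun j => by rw [← heval]; exact hxsol j
    have h0 : bV.repr (Additive.ofMul (⟨t ^ 2, htVsq⟩ : ↥V)) = 0 := by
      refine DFunLike.ext _ _ (fun j => ?_)
      have hj := hfz j
      rw [f_apply _ htVsq] at hj
      simpa using hj
    have h1 : Additive.ofMul (⟨t ^ 2, htVsq⟩ : ↥V) = 0 := by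
      have := bV.repr.map_eq_zero_iff.mp h0
      exact this
    have h2 : (⟨t ^ 2, htVsq⟩ : ↥V) = 1 := by
      simpa using congrArg Additive.toMul h1
    exact congrArg Subtype.val h2
  -- t is not in V
  have hmkt : Additive.ofMul ((t : G ⧸ V)) = ∑ i : Fin rW, x i • bW i := by
    have h1 : ((t : G) : G ⧸ V)
        = ((List.finRange rW).map
            (fun i => (Additive.toMul (bW i) : G ⧸ V) ^ (x i).val)).prod := by
      calc ((t : G) : G ⧸ V)
          = (QuotientGroup.mk' V) (((List.finRange rW).map (fun i => gs i ^ (x i).val)).prod) :=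
            rfl
      _ = (((List.finRange rW).map (fun i => gs i ^ (x i).val)).map
            (QuotientGroup.mk' V)).prod := map_list_prod _ _
      _ = ((List.finRange rW).map
            (fun i => (Additive.toMul (bW i) : G ⧸ V) ^ (x i).val)).prod := by
            rw [List.map_map]
            refine congrArg List.prod (List.map_congr_left (fun i _ => ?_))
            show (QuotientGroup.mk' V) (gs i ^ (x i).val) = Additive.toMul (bW i) ^ (x i).val
            rw [map_pow]
            exact congrArg (· ^ (x i).val) (hgs i)
    rw [h1, ofMul_list_prod, List.map_map]
    rw [show ((fun a => Additive.ofMul a) ∘ fun i => (Additive.toMul (bW i) : G ⧸ V) ^ (x i).val)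
        = fun i => (x i).val • bW i from funext (fun i => by
          rw [Function.comp_apply, ofMul_pow, ofMul_toMul])]
    rw [← Fin.sum_univ_def]
    exact Finset.sum_congr rfl (fun i _ => by
      rw [← Nat.cast_smul_eq_nsmul (ZMod 2), ZMod.natCast_rightInverse (x i)])
  have htnotV : t ∉ V := by
    intro hmem
    have hq1 : ((t : G) : G ⧸ V) = 1 := (QuotientGroup.eq_one_iff t).mpr hmem
    have h0 : ∑ i : Fin rW, x i • bW i = 0 := by
      rw [← hmkt, hq1]; simp
    have hz := Fintype.linearIndependent_iff.mp bW.linearIndependent x h0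
    exact hxne0 (funext hz)
  have htne1 : t ≠ 1 := fun h => htnotV (h ▸ one_mem V)
  have htZ : t ∈ Subgroup.center G := h2C t (orderOf_eq_prime ht2 htne1)
  let B : Subgroup G :=
    { carrier := {g | g * g = 1 ∧ g ∈ Subgroup.center G}
      one_mem' := ⟨mul_one 1, Subgroup.one_mem _⟩
      mul_mem' := by
        rintro a b ⟨ha2, haZ⟩ ⟨hb2, hbZ⟩
        refine ⟨?_, Subgroup.mul_mem _ haZ hbZ⟩
        have hab : b * a = a * b := Subgroup.mem_center_iff.mp haZ b
        calc a * b * (a * b) = a * (b * a) * b := by group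
        _ = a * (a * b) * b := by rw [hab]
        _ = a * a * (b * b) := by group
        _ = 1 := by rw [ha2, hb2, mul_one]
      inv_mem' := by
        rintro a ⟨ha2, haZ⟩
        have hainv : a⁻¹ = a := inv_eq_of_mul_eq_one_right ha2
        exact ⟨by rw [hainv]; exact ha2, Subgroup.inv_mem _ haZ⟩ }
  have hVB : V ≤ B := fun v hv => ⟨hV.1 v hv, hVZ v hv⟩
  have htB : t ∈ B := ⟨by rw [← pow_two]; exact ht2, htZ⟩
  have hBelem : IsElemAbelian2 B :=
    ⟨fun a ha => ha.1, fun a ha b hb => (Subgroup.mem_center_iff.mp ha.2 b).symm⟩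
  have hVeqB : V = B := Subgroup.eq_of_le_of_card_ge hVB (hmax B hBelem)
  exact htnotV (hVeqB ▸ htB)
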